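/- The special linear group SL(2,ℤ) is isomorphic to the presented group ⟨x, y | x³ = y², x⁶ = 1⟩; explicitly, there is a group isomorphism from the presented group on two generators x, y with relations x³y⁻² and x⁶ to SL(2,ℤ) sending x to the matrix [[0,−1],[1,1]] and y to the matrix [[0,−1],[1,0]]. -/

import Mathlib

open Matrix MatrixGroups

section SL2ZPresAux

open ModularGroup

namespace SL2ZPres



def Xs : SL(2, ℤ) := ⟨!![0, -1; 1, 1], by norm_num [Matrix.det_fin_two_of]⟩
def Ys : SL(2, ℤ) := ⟨!![0, -1; 1, 0], by norm_num [Matrix.det_fin_two_of]⟩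
def Zs : SL(2, ℤ) := ⟨!![-1, 0; 0, -1], by norm_num [Matrix.det_fin_two_of]⟩

lemma X3 : Xs ^ 3 = Zs := by
  ext i j
  rw [Matrix.SpecialLinearGroup.coe_pow]
  simp only [Xs, Zs, pow_succ, pow_zero, Matrix.SpecialLinearGroup.coe_mul, one_mul]
  norm_num [Matrix.mul_fin_two]

lemma Y2 : Ys ^ 2 = Zs := by
  ext i j
  rw [Matrix.SpecialLinearGroup.coe_pow]
  simp only [Ys, Zs, pow_succ, pow_zero, Matrix.SpecialLinearGroup.coe_mul, one_mul]
  norm_num [Matrix.mul_fin_two]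

lemma Z2 : Zs ^ 2 = 1 := by
  ext i j
  rw [Matrix.SpecialLinearGroup.coe_pow]
  simp only [Zs, pow_succ, pow_zero, Matrix.SpecialLinearGroup.coe_mul, one_mul,
    Matrix.SpecialLinearGroup.coe_one]
  norm_num [Matrix.mul_fin_two]
  fin_cases i <;> fin_cases j <;> simp

def rels : Set (FreeGroup (Fin 2)) :=
  {FreeGroup.of 0 ^ 3 * (FreeGroup.of 1)⁻¹ ^ 2, FreeGroup.of 0 ^ 6}

abbrev G := PresentedGroup rels

lemma rels_hold : ∀ r ∈ rels, FreeGroup.lift (![Xs, Ys]) r = 1 := by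
  intro r hr
  rcases hr with h | h <;> subst h <;>
      simp only [_root_.map_mul, map_pow, map_inv, FreeGroup.lift_apply_of, Matrix.cons_val_zero,
        Matrix.cons_val_one, Matrix.head_cons]
  · rw [inv_pow, Y2, X3, mul_inv_cancel]
  · rw [show (6 : ℕ) = 3 * 2 from rfl, pow_mul, X3, Z2]

def φ : G →* SL(2, ℤ) := PresentedGroup.toGroup rels_hold

@[simp] lemma φ_of0 : φ (PresentedGroup.of 0) = Xs := PresentedGroup.toGroup.of rels_hold
@[simp] lemma φ_of1 : φ (PresentedGroup.of 1) = Ys := PresentedGroup.toGroup.of rels_hold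





lemma emod_natAbs_lt (a c : ℤ) (hc : c ≠ 0) : (a % c).natAbs < c.natAbs := by
  have h1 : 0 ≤ a % c := Int.emod_nonneg a hc
  have h2 : a % c < c ∨ a % c < -c := by
    rcases lt_or_gt_of_ne hc with h | h
    · right
      rw [← Int.emod_neg]
      exact Int.emod_lt_of_pos a (by omega)
    · exact Or.inl (Int.emod_lt_of_pos a h)
  omega

lemma closure_ST (H : Subgroup SL(2, ℤ)) (hS : S ∈ H) (hT : T ∈ H) (A : SL(2, ℤ)) :
    A ∈ H := by
  generalize hn : (A.1 1 0).natAbs = n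
  induction n using Nat.strong_induction_on generalizing A with
  | _ n ih =>
  obtain ⟨a, b, c, d, hA⟩ : ∃ a b c d, A.1 = !![a, b; c, d] :=
    ⟨_, _, _, _, Matrix.eta_fin_two A.1⟩
  have hdet := A.2
  rw [hA, Matrix.det_fin_two_of] at hdet
  by_cases hc : c = 0
  · subst hc
    have h2 : a * d = 1 := by linarith
    rcases Int.mul_eq_one_iff_eq_one_or_neg_one.mp h2 with ⟨h3, h4⟩ | ⟨h3, h4⟩
    · have : A = T ^ b := by
        apply Subtype.ext
        rw [coe_T_zpow, hA, h3, h4]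
      rw [this]; exact H.zpow_mem hT b
    · have : A = S * (S * T ^ (-b)) := by
        apply Subtype.ext
        have : (S * (S * T ^ (-b))).1 = S.1 * (S.1 * (T ^ (-b)).1) := rfl
        rw [this, coe_S, coe_T_zpow, Matrix.mul_fin_two, Matrix.mul_fin_two,
          hA, h3, h4]
        norm_num
      rw [this]
      exact H.mul_mem hS (H.mul_mem hS (H.zpow_mem hT (-b)))
  · set q := a / c with hq
    have key : A = T ^ q * S⁻¹ * (S * (T ^ (-q) * A)) := by group
    have hcoe : (S * (T ^ (-q) * A)).1 = S.1 * ((T ^ (-q)).1 * A.1) := rfl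
    rw [coe_S, coe_T_zpow, hA, Matrix.mul_fin_two, Matrix.mul_fin_two] at hcoe
    have hB : (S * (T ^ (-q) * A)).1 1 0 = a % c := by
      rw [hcoe, Int.emod_def]
      simp
      ring
    have hlt : ((S * (T ^ (-q) * A)).1 1 0).natAbs < n := by
      rw [hB, ← hn, hA]
      simpa using emod_natAbs_lt a c hc
    have hmem := ih _ hlt (S * (T ^ (-q) * A)) rfl
    rw [key]
    exact H.mul_mem (H.mul_mem (H.zpow_mem hT q) (H.inv_mem hS)) hmem





abbrev Irr := {t : ℝ // Irrational t}

noncomputable def num (A : SL(2, ℤ)) (t : ℝ) : ℝ := (A.1 0 0 : ℝ) * t + (A.1 0 1 : ℝ)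
noncomputable def den (A : SL(2, ℤ)) (t : ℝ) : ℝ := (A.1 1 0 : ℝ) * t + (A.1 1 1 : ℝ)

lemma den_ne_zero (A : SL(2, ℤ)) (t : Irr) : den A t.1 ≠ 0 := by
  intro h
  obtain ⟨a, b, c, d, hA⟩ : ∃ a b c d, A.1 = !![a, b; c, d] :=
    ⟨_, _, _, _, Matrix.eta_fin_two A.1⟩
  have hdet := A.2
  rw [hA, Matrix.det_fin_two_of] at hdet
  rw [den, hA] at h
  simp at h
  by_cases hc : c = 0
  · subst hc
    have hd : (d : ℝ) = 0 := by push_cast at h; linarith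
    have : d = 0 := by exact_mod_cast hd
    subst this
    simp at hdet
  · apply t.2
    refine ⟨(-d : ℚ) / (c : ℚ), ?_⟩
    have hcR : (c : ℝ) ≠ 0 := Int.cast_ne_zero.mpr hc
    push_cast
    field_simp
    linarith

lemma num_div_den_irrational (A : SL(2, ℤ)) (t : Irr) : Irrational (num A t.1 / den A t.1) := by
  rintro ⟨q, hq⟩
  obtain ⟨a, b, c, d, hA⟩ : ∃ a b c d, A.1 = !![a, b; c, d] :=
    ⟨_, _, _, _, Matrix.eta_fin_two A.1⟩
  have hdet := A.2
  rw [hA, Matrix.det_fin_two_of] at hdet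
  have hden := den_ne_zero A t
  have hq' : num A t.1 = (q : ℝ) * den A t.1 := by
    field_simp at hq
    linarith [hq]
  rw [num, hA] at hq'
  rw [den, hA] at hq' hden
  simp at hq' hden
  -- (a - q c) t = q d - b
  have key : ((a : ℝ) - q * c) * t.1 = q * d - b := by ring_nf; ring_nf at hq'; linarith
  by_cases h0 : (a : ℝ) = (q : ℝ) * (c : ℝ)
  · have hb : (b : ℝ) = q * d := by
      have hz : ((a : ℝ) - q * c) = 0 := by rw [h0]; ring
      rw [hz, zero_mul] at key
      linarith
    have : ((a * d - b * c : ℤ) : ℝ) = 0 := by push_cast; rw [h0, hb]; ring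
    rw [hdet] at this; norm_num at this
  · have hne : ((a : ℝ) - (q : ℝ) * (c : ℝ)) ≠ 0 := fun hx => h0 (by linarith)
    apply t.2
    refine ⟨((q : ℚ) * d - b) / (a - q * c), ?_⟩
    push_cast
    rw [div_eq_iff hne]
    linarith [key]

noncomputable instance : SMul SL(2, ℤ) Irr :=
  ⟨fun A t => ⟨num A t.1 / den A t.1, num_div_den_irrational A t⟩⟩

lemma smul_def (A : SL(2, ℤ)) (t : Irr) : (A • t).1 = num A t.1 / den A t.1 := rfl

noncomputable instance : MulAction SL(2, ℤ) Irr where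
  one_smul t := by
    apply Subtype.ext
    rw [smul_def, num, den]
    simp [Matrix.SpecialLinearGroup.coe_one, Matrix.one_apply]
  mul_smul A B t := by
    apply Subtype.ext
    obtain ⟨a, b, c, d, hA⟩ : ∃ a b c d, A.1 = !![a, b; c, d] :=
      ⟨_, _, _, _, Matrix.eta_fin_two A.1⟩
    obtain ⟨a', b', c', d', hB⟩ : ∃ a b c d, B.1 = !![a, b; c, d] :=
      ⟨_, _, _, _, Matrix.eta_fin_two B.1⟩
    have hdB := den_ne_zero B t
    have hdA := den_ne_zero A (B • t)
    have hdAB := den_ne_zero (A * B) t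
    have hBt : (B • t).1 = num B t.1 / den B t.1 := rfl
    rw [smul_def, smul_def, smul_def]
    rw [hBt] at hdA
    simp only [num, den, Matrix.SpecialLinearGroup.coe_mul, hA, hB, Matrix.mul_fin_two]
      at hdA hdB hdAB ⊢
    simp at hdA hdB hdAB ⊢
    push_cast at hdA hdB hdAB ⊢
    field_simp [hdB] at hdA
    field_simp [hdA, hdB, hdAB]
    ring
    



def zmodHom {K : Type*} [Group K] (n : ℕ) (g : K) (h : g ^ (n : ℕ) = 1) :
    Multiplicative (ZMod n) →* K :=
  AddMonoidHom.toMultiplicativeLeft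
    (ZMod.lift n ⟨zmultiplesHom (Additive K) (Additive.ofMul g), by
      simp only [zmultiplesHom_apply, natCast_zsmul, ← ofMul_pow, h]
      rfl⟩)

lemma zmodHom_intCast {K : Type*} [Group K] (n : ℕ) (g : K) (h : g ^ (n : ℕ) = 1) (k : ℤ) :
    zmodHom n g h (Multiplicative.ofAdd ((k : ℤ) : ZMod n)) = g ^ k := by
  simp only [zmodHom, AddMonoidHom.coe_toMultiplicativeLeft, Function.comp_apply,
    toAdd_ofAdd, ZMod.lift_coe, zmultiplesHom_apply]
  rw [← ofMul_zpow]
  rfl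

lemma zmodHom_one' {K : Type*} [Group K] (n : ℕ) (g : K) (h : g ^ (n : ℕ) = 1) :
    zmodHom n g h (Multiplicative.ofAdd (1 : ZMod n)) = g := by
  have := zmodHom_intCast n g h 1
  simpa using this


-- ## The permutation representation and ping-pong

open Pointwise

noncomputable def ρ : SL(2, ℤ) →* Equiv.Perm Irr := MulAction.toPermHom SL(2, ℤ) Irr

lemma ρ_smul (A : SL(2, ℤ)) (t : Irr) : ρ A • t = A • t := rfl

lemma Z_smul (t : Irr) : Zs • t = t := by
  apply Subtype.ext
  rw [smul_def, num, den, Zs]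
  simp

lemma ρZ : ρ Zs = 1 := by
  ext t
  exact congrArg Subtype.val (Z_smul t)

lemma ρY2 : ρ Ys ^ 2 = 1 := by rw [← map_pow, Y2, ρZ]
lemma ρX3 : ρ Xs ^ 3 = 1 := by rw [← map_pow, X3, ρZ]

lemma Y_smul_pos (t : Irr) (ht : t.1 < 0) : 0 < (Ys • t).1 := by
  rw [smul_def, num, den, Ys]
  simp
  exact div_pos_of_neg_of_neg (by norm_num) ht

lemma X_smul_neg (t : Irr) (ht : -1 < t.1) : (Xs • t).1 < 0 := by
  rw [smul_def, num, den, Xs]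
  simp
  apply div_neg_of_neg_of_pos <;> linarith

lemma X_smul_gt (t : Irr) (ht : 0 < t.1) : -1 < (Xs • t).1 := by
  rw [smul_def, num, den, Xs]
  simp
  rw [lt_div_iff₀ (by linarith : (0:ℝ) < t.1 + 1)]
  linarith

abbrev Hfam : Fin 2 → Type := fun i =>
  match i with
  | 0 => Multiplicative (ZMod 2)
  | 1 => Multiplicative (ZMod 3)

instance HfamGroup : ∀ i, Group (Hfam i) := fun i =>
  match i with
  | 0 => inferInstanceAs (Group (Multiplicative (ZMod 2)))
  | 1 => inferInstanceAs (Group (Multiplicative (ZMod 3)))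

noncomputable def pingf : ∀ i, Hfam i →* Equiv.Perm Irr := fun i =>
  match i with
  | 0 => zmodHom 2 (ρ Ys) ρY2
  | 1 => zmodHom 3 (ρ Xs) ρX3

def Xset : Fin 2 → Set Irr := ![{t | 0 < t.1}, {t | t.1 < 0}]

lemma mem_Xset0 (t : Irr) : t ∈ Xset 0 ↔ 0 < t.1 := Iff.rfl
lemma mem_Xset1 (t : Irr) : t ∈ Xset 1 ↔ t.1 < 0 := Iff.rfl

lemma fin2_cases : ∀ i : Fin 2, i = 0 ∨ i = 1 := by decide

lemma Phi_injective : Function.Injective (Monoid.CoprodI.lift pingf) := by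
  apply Monoid.CoprodI.lift_injective_of_ping_pong pingf _ Xset
  · -- nonempty
    intro i
    have h2 : (0:ℝ) < Real.sqrt 2 := by positivity
    rcases fin2_cases i with rfl | rfl
    · exact ⟨⟨Real.sqrt 2, irrational_sqrt_two⟩, (mem_Xset0 _).mpr h2⟩
    · exact ⟨⟨-Real.sqrt 2, irrational_sqrt_two.neg⟩, (mem_Xset1 _).mpr (by show -Real.sqrt 2 < 0; linarith)⟩
  · -- disjoint
    intro i j hij
    rcases fin2_cases i with rfl | rfl <;> rcases fin2_cases j with rfl | rfl <;>
        [exact (hij rfl).elim; skip; skip; exact (hij rfl).elim] <;>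
      · rw [Function.onFun, Set.disjoint_left]
        intro t h1 h2
        rw [mem_Xset0] at *
        rw [mem_Xset1] at *
        linarith
  · -- ping pong
    intro i j hij
    rcases fin2_cases i with rfl | rfl <;> rcases fin2_cases j with rfl | rfl
    · exact (hij rfl).elim
    · intro h hne
      have hval : ∀ g : Hfam 0, g ≠ 1 →
          g = Multiplicative.ofAdd (((1:ℤ)) : ZMod 2) := by decide
      rw [hval h hne]
      show (zmodHom 2 (ρ Ys) ρY2) _ • Xset 1 ⊆ Xset 0
      rw [zmodHom_intCast 2 (ρ Ys) ρY2 1, zpow_one]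
      intro x hx
      obtain ⟨t, ht, rfl⟩ := hx
      rw [mem_Xset1] at ht
      show 0 < ((ρ Ys • t : Irr)).1
      rw [ρ_smul]
      exact Y_smul_pos t ht
    · intro h hne
      have hval : ∀ g : Hfam 1, g ≠ 1 →
          g = Multiplicative.ofAdd (((1:ℤ)) : ZMod 3) ∨
          g = Multiplicative.ofAdd (((2:ℤ)) : ZMod 3) := by decide
      rcases hval h hne with hv | hv <;> rw [hv] <;>
        show (zmodHom 3 (ρ Xs) ρX3) _ • Xset 0 ⊆ Xset 1
      · rw [zmodHom_intCast 3 (ρ Xs) ρX3 1, zpow_one]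
        intro x hx
        obtain ⟨t, ht, rfl⟩ := hx
        rw [mem_Xset0] at ht
        show ((ρ Xs • t : Irr)).1 < 0
        rw [ρ_smul]
        exact X_smul_neg t (by linarith)
      · rw [zmodHom_intCast 3 (ρ Xs) ρX3 2]
        intro x hx
        obtain ⟨t, ht, rfl⟩ := hx
        rw [mem_Xset0] at ht
        show ((ρ Xs ^ (2:ℤ) • t : Irr)).1 < 0
        rw [show (2:ℤ) = 1 + 1 from rfl, _root_.zpow_add, zpow_one, mul_smul, ρ_smul, ρ_smul]
        exact X_smul_neg (Xs • t) (X_smul_gt t ht)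
    · exact (hij rfl).elim
  · -- cardinality
    right
    refine ⟨1, ?_⟩
    rw [show Hfam 1 = Multiplicative (ZMod 3) from rfl, Cardinal.mk_fintype]
    norm_num

-- ## Assembling the isomorphism

lemma rel_mk {r : FreeGroup (Fin 2)} (hr : r ∈ rels) : PresentedGroup.mk rels r = 1 :=
  (QuotientGroup.eq_one_iff r).mpr (Subgroup.subset_normalClosure hr)

lemma mem_rels_1 : FreeGroup.of 0 ^ 3 * (FreeGroup.of (1 : Fin 2))⁻¹ ^ 2 ∈ rels :=
  Set.mem_insert _ _

lemma mem_rels_2 : FreeGroup.of (0 : Fin 2) ^ 6 ∈ rels :=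
  Set.mem_insert_of_mem _ rfl

def z : G := (PresentedGroup.of (rels := rels) 0) ^ 3

lemma z_eq_y2 : (PresentedGroup.of (rels := rels) 1) ^ 2 = z := by
  have h := rel_mk mem_rels_1
  rw [_root_.map_mul, map_pow, map_pow, map_inv, inv_pow] at h
  exact (mul_inv_eq_one.mp h).symm

lemma z_sq : z ^ 2 = 1 := by
  have h := rel_mk mem_rels_2
  rw [map_pow] at h
  rw [z, ← pow_mul]
  exact h

lemma z_comm (g : G) : z * g = g * z := by
  have : g ∈ Subgroup.centralizer {z} := by
    apply PresentedGroup.generated_by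
    intro j
    rw [Subgroup.mem_centralizer_iff]
    rintro h ⟨rfl⟩
    rcases fin2_cases j with rfl | rfl
    · rw [z]
      group
    · rw [← z_eq_y2]
      group
  exact Subgroup.mem_centralizer_iff.mp this z rfl

def N : Subgroup G := Subgroup.zpowers z

instance : N.Normal := by
  constructor
  rintro n ⟨k, rfl⟩ g
  have hgz : Commute g z := (z_comm g).symm
  rw [(hgz.zpow_right k).eq, mul_assoc, mul_inv_cancel, mul_one]
  exact Subgroup.zpow_mem_zpowers z k

def fθ : Fin 2 → Monoid.CoprodI Hfam :=
  ![Monoid.CoprodI.of (M := Hfam) (i := 1) (Multiplicative.ofAdd (1 : ZMod 3)),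
    Monoid.CoprodI.of (M := Hfam) (i := 0) (Multiplicative.ofAdd (1 : ZMod 2))]

lemma fθ_rels : ∀ r ∈ rels, FreeGroup.lift fθ r = 1 := by
  have h3 : (Multiplicative.ofAdd (1 : ZMod 3) : Multiplicative (ZMod 3)) ^ 3 = 1 := by decide
  have h2 : (Multiplicative.ofAdd (1 : ZMod 2) : Multiplicative (ZMod 2)) ^ 2 = 1 := by decide
  rintro r (rfl | rfl)
  · rw [_root_.map_mul, map_pow, map_pow, map_inv, FreeGroup.lift_apply_of, FreeGroup.lift_apply_of]
    show (Monoid.CoprodI.of (M := Hfam) (i := 1) (Multiplicative.ofAdd (1 : ZMod 3))) ^ 3 *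
      ((Monoid.CoprodI.of (M := Hfam) (i := 0) (Multiplicative.ofAdd (1 : ZMod 2)))⁻¹) ^ 2 = 1
    have e3 : (Monoid.CoprodI.of (M := Hfam) (i := 1)
        (Multiplicative.ofAdd (1 : ZMod 3))) ^ 3 = 1 := by
      rw [← map_pow _ _ 3, h3, _root_.map_one]
    have e2 : (Monoid.CoprodI.of (M := Hfam) (i := 0)
        (Multiplicative.ofAdd (1 : ZMod 2))) ^ 2 = 1 := by
      rw [← map_pow _ _ 2, h2, _root_.map_one]
    rw [e3, inv_pow, e2, inv_one, one_mul]
  · rw [map_pow, FreeGroup.lift_apply_of]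
    show (Monoid.CoprodI.of (M := Hfam) (i := 1) (Multiplicative.ofAdd (1 : ZMod 3))) ^ 6 = 1
    have e3 : (Monoid.CoprodI.of (M := Hfam) (i := 1)
        (Multiplicative.ofAdd (1 : ZMod 3))) ^ 3 = 1 := by
      rw [← map_pow _ _ 3, h3, _root_.map_one]
    rw [show (6 : ℕ) = 3 * 2 from rfl, pow_mul, e3, one_pow]

def θ : G →* Monoid.CoprodI Hfam := PresentedGroup.toGroup fθ_rels

lemma θ_of0 : θ (PresentedGroup.of 0) =
    Monoid.CoprodI.of (M := Hfam) (i := 1) (Multiplicative.ofAdd (1 : ZMod 3)) := by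
  rw [θ, PresentedGroup.toGroup.of]
  simp [fθ]

lemma θ_of1 : θ (PresentedGroup.of 1) =
    Monoid.CoprodI.of (M := Hfam) (i := 0) (Multiplicative.ofAdd (1 : ZMod 2)) := by
  rw [θ, PresentedGroup.toGroup.of]
  simp [fθ]

lemma mkY2 : (QuotientGroup.mk' N (PresentedGroup.of 1)) ^ 2 = 1 := by
  rw [← map_pow, z_eq_y2]
  exact (QuotientGroup.eq_one_iff z).mpr (Subgroup.mem_zpowers z)

lemma mkX3 : (QuotientGroup.mk' N (PresentedGroup.of 0)) ^ 3 = 1 := by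
  rw [← map_pow]
  exact (QuotientGroup.eq_one_iff z).mpr (Subgroup.mem_zpowers z)

noncomputable def βf : ∀ i, Hfam i →* G ⧸ N := fun i =>
  match i with
  | 0 => zmodHom 2 (QuotientGroup.mk' N (PresentedGroup.of 1)) mkY2
  | 1 => zmodHom 3 (QuotientGroup.mk' N (PresentedGroup.of 0)) mkX3

lemma βθ : (Monoid.CoprodI.lift βf).comp θ = QuotientGroup.mk' N := by
  apply PresentedGroup.ext
  intro x
  rcases fin2_cases x with rfl | rfl
  · rw [MonoidHom.comp_apply, θ_of0, Monoid.CoprodI.lift_of]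
    exact zmodHom_one' 3 _ mkX3
  · rw [MonoidHom.comp_apply, θ_of1, Monoid.CoprodI.lift_of]
    exact zmodHom_one' 2 _ mkY2

lemma Φθ : (Monoid.CoprodI.lift pingf).comp θ = ρ.comp φ := by
  apply PresentedGroup.ext
  intro x
  rcases fin2_cases x with rfl | rfl
  · rw [MonoidHom.comp_apply, θ_of0, Monoid.CoprodI.lift_of, MonoidHom.comp_apply, φ_of0]
    exact zmodHom_one' 3 _ ρX3
  · rw [MonoidHom.comp_apply, θ_of1, Monoid.CoprodI.lift_of, MonoidHom.comp_apply, φ_of1]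
    exact zmodHom_one' 2 _ ρY2

lemma Zs_ne_one : Zs ≠ 1 := by
  intro h
  have := congrArg (fun A : SL(2, ℤ) => A.1 0 0) h
  simp [Zs] at this

lemma φz : φ z = Zs := by
  rw [z, map_pow, φ_of0, X3]

lemma φ_injective : Function.Injective φ := by
  rw [injective_iff_map_eq_one]
  intro g hg
  have h1 : Monoid.CoprodI.lift pingf (θ g) = 1 := by
    have := congrFun (congrArg DFunLike.coe Φθ) g
    simp only [MonoidHom.comp_apply] at this
    rw [this, hg, _root_.map_one]
  have h2 : θ g = 1 := Phi_injective (by rw [h1, _root_.map_one])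
  have h3 : QuotientGroup.mk' N g = 1 := by
    have := congrFun (congrArg DFunLike.coe βθ) g
    simp only [MonoidHom.comp_apply] at this
    rw [← this, h2, _root_.map_one]
  obtain ⟨k, hk0⟩ := (QuotientGroup.eq_one_iff g).mp h3
  have hk : z ^ k = g := hk0
  clear hk0
  have hz2 : z ^ (2 : ℤ) = 1 := by
    rw [show (2:ℤ) = ((2:ℕ) : ℤ) from rfl, zpow_natCast, z_sq]
  rcases Int.even_or_odd k with ⟨m, rfl⟩ | ⟨m, rfl⟩
  · rw [← hk, show m + m = 2 * m by ring, _root_.zpow_mul, hz2, _root_.one_zpow]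
  · exfalso
    apply Zs_ne_one
    have h5 : Zs ^ (2 * m + 1 : ℤ) = 1 := by rw [← φz, ← _root_.map_zpow, hk, hg]
    have hZs2 : Zs ^ (2 : ℤ) = 1 := by
      rw [show (2:ℤ) = ((2:ℕ) : ℤ) from rfl, zpow_natCast, Z2]
    rw [_root_.zpow_add, _root_.zpow_mul, hZs2, _root_.one_zpow, one_mul, zpow_one] at h5
    exact h5

lemma YsT : Ys * T = Xs := by
  apply Subtype.ext
  rw [Matrix.SpecialLinearGroup.coe_mul, coe_T, Ys, Xs]
  norm_num [Matrix.mul_fin_two]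

lemma φ_surjective : Function.Surjective φ := by
  intro A
  have hS : S ∈ φ.range := ⟨PresentedGroup.of 1, by rw [φ_of1]; exact Subtype.ext rfl⟩
  have hT : T ∈ φ.range := by
    refine ⟨(PresentedGroup.of 1)⁻¹ * PresentedGroup.of 0, ?_⟩
    rw [_root_.map_mul, map_inv, φ_of0, φ_of1, eq_comm, eq_inv_mul_iff_mul_eq]
    exact YsT
  exact closure_ST φ.range hS hT A

end SL2ZPres


end SL2ZPresAux

open SL2ZPres

/-- SL(2,ℤ) is isomorphic to the presented group ⟨x, y | x³ = y², x⁶ = 1⟩,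
via x ↦ [[0,−1],[1,1]] and y ↦ [[0,−1],[1,0]]. -/
theorem sl2z_presentation :
    ∃ e : PresentedGroup
        ({FreeGroup.of 0 ^ 3 * (FreeGroup.of 1)⁻¹ ^ 2, FreeGroup.of 0 ^ 6} :
          Set (FreeGroup (Fin 2))) ≃* SL(2, ℤ),
      e (PresentedGroup.of 0) =
        ⟨!![0, -1; 1, 1], by norm_num [Matrix.det_fin_two_of]⟩ ∧
      e (PresentedGroup.of 1) =
        ⟨!![0, -1; 1, 0], by norm_num [Matrix.det_fin_two_of]⟩ := by
  refine ⟨MulEquiv.ofBijective φ ⟨φ_injective, φ_surjective⟩, ?_, ?_⟩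
  · erw [MulEquiv.ofBijective_apply]
    exact φ_of0.trans (Subtype.ext rfl)
  · erw [MulEquiv.ofBijective_apply]
    exact φ_of1.trans (Subtype.ext rfl)
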